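/- Let A ∈ GL_2(ℝ) satisfy ‖A‖ < 1/3 and |det A| > 1/10. Then dimaff(A, A, Aᵀ, Aᵀ) > 1. In fact the pressure satisfies P(A, A, Aᵀ, Aᵀ; 1) ≥ log(4|det A|/‖A‖) > 0. -/

import Mathlib

open scoped BigOperators Kronecker

noncomputable section

namespace PaperProj

open Matrix

/-- The `j`-th singular value (`1`-indexed, in decreasing order) of a real square matrix:
the non-negative square roots of the eigenvalues of `AᵀA`, listed in decreasing order
with multiplicity. -/
noncomputable def sval {ι : Type*} [Fintype ι] [DecidableEq ι] (A : Matrix ι ι ℝ) (j : ℕ) : ℝ :=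
  ((((Finset.univ.val.map fun i : ι =>
      Real.sqrt ((Matrix.isHermitian_iff_isSymm.mpr (Matrix.isSymm_transpose_mul_self A)).eigenvalues i)).sort
    (· ≤ ·)).reverse).getD (j - 1) 0)

/-- Falconer's singular value function `φ^s`. -/
noncomputable def svf {ι : Type*} [Fintype ι] [DecidableEq ι] (s : ℝ) (A : Matrix ι ι ℝ) : ℝ :=
  if s ≤ (Fintype.card ι : ℝ) then
    (∏ j ∈ Finset.Icc 1 ⌊s⌋₊, sval A j) * sval A ⌈s⌉₊ ^ (s - (⌊s⌋₊ : ℝ))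
  else |A.det| ^ (s / (Fintype.card ι : ℝ))

/-- The product `A_{i_1} ⋯ A_{i_n}` associated to a word `i = i_1 ⋯ i_n`. -/
noncomputable def wordProd {ι : Type*} [Fintype ι] [DecidableEq ι] {N : ℕ}
    (A : Fin N → Matrix ι ι ℝ) {n : ℕ} (i : Fin n → Fin N) : Matrix ι ι ℝ :=
  (List.ofFn fun j => A (i j)).prod

/-- The affinity dimension: `inf {s > 0 : ∑_{n≥1} ∑_{|i|=n} φ^s(A_i) < ∞}`. -/
noncomputable def affDim {ι : Type*} [Fintype ι] [DecidableEq ι] {N : ℕ}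
    (A : Fin N → Matrix ι ι ℝ) : ℝ :=
  sInf {s : ℝ | 0 < s ∧
    Summable fun n : ℕ => ∑ i : Fin (n + 1) → Fin N, svf s (wordProd A i)}

/-- The pressure `P(A_1,…,A_N; s) = lim_n (1/n) log ∑_{|i|=n} φ^s(A_i)` (the limit exists by
subadditivity, so it equals the limsup used here). -/
noncomputable def pressure {ι : Type*} [Fintype ι] [DecidableEq ι] {N : ℕ}
    (A : Fin N → Matrix ι ι ℝ) (s : ℝ) : ℝ :=
  Filter.limsup
    (fun n : ℕ => Real.log (∑ i : Fin n → Fin N, svf s (wordProd A i)) / n) Filter.atTop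

/-- The tuple `(A_1,…,A_N)` is contracting with respect to some norm on `ℝ^d`. -/
def IsContractingTuple {ι : Type*} [Fintype ι] [DecidableEq ι] {N : ℕ}
    (A : Fin N → Matrix ι ι ℝ) : Prop :=
  ∃ (ν : Seminorm ℝ (ι → ℝ)) (c : ℝ), (∀ x : ι → ℝ, x ≠ 0 → 0 < ν x) ∧ c < 1 ∧
    ∀ (i : Fin N) (x : ι → ℝ), ν ((A i).mulVec x) ≤ c * ν x

/-- Irreducibility: no nonzero proper subspace is preserved by every map of the tuple. -/
def IrreducibleTuple {N : ℕ} {V : Type*} [AddCommGroup V] [Module ℝ V]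
    (f : Fin N → V →ₗ[ℝ] V) : Prop :=
  ∀ W : Submodule ℝ V, (∀ i, W.map (f i) ≤ W) → W = ⊥ ∨ W = ⊤

/-- Strong irreducibility: no finite union of nonzero proper subspaces is preserved by
every map of the tuple. -/
def StronglyIrreducibleTuple {N : ℕ} {V : Type*} [AddCommGroup V] [Module ℝ V]
    (f : Fin N → V →ₗ[ℝ] V) : Prop :=
  ∀ (m : ℕ) (W : Fin (m + 1) → Submodule ℝ V), (∀ j, W j ≠ ⊥) → (∀ j, W j ≠ ⊤) →
    ¬ (∀ i, (f i) '' (⋃ j, (W j : Set V)) = ⋃ j, (W j : Set V))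

/-- The linear map induced on the `k`-th exterior power by a linear endomorphism. -/
noncomputable def extPowMap {V : Type*} [AddCommGroup V] [Module ℝ V] (k : ℕ)
    (f : V →ₗ[ℝ] V) : ⋀[ℝ]^k V →ₗ[ℝ] ⋀[ℝ]^k V :=
  (ExteriorAlgebra.map f).toLinearMap.restrict (p := ⋀[ℝ]^k V) (q := ⋀[ℝ]^k V)
    (by
      intro x hx
      have h : Submodule.map (ExteriorAlgebra.map f).toLinearMap (⋀[ℝ]^k V) ≤ ⋀[ℝ]^k V := by
        conv_lhs => rw [← ExteriorAlgebra.ιMulti_span_fixedDegree]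
        rw [Submodule.map_span, Submodule.span_le]
        rintro y ⟨z, ⟨m, rfl⟩, rfl⟩
        rw [AlgHom.toLinearMap_apply, ExteriorAlgebra.map_apply_ιMulti]
        rw [← ExteriorAlgebra.ιMulti_span_fixedDegree]
        exact Submodule.subset_span ⟨_, rfl⟩
      exact h ⟨x, hx, rfl⟩)

instance extPowFree {V : Type*} [AddCommGroup V] [Module ℝ V] (k : ℕ) :
    Module.Free ℝ (⋀[ℝ]^k V) := Module.Free.of_divisionRing ℝ _

instance extPowFinite {V : Type*} [AddCommGroup V] [Module ℝ V] [Module.Finite ℝ V] (k : ℕ) :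
    Module.Finite ℝ (⋀[ℝ]^k V) := by
  rw [Module.Finite.iff_fg]
  refine Submodule.FG.pow ?_ k
  rw [← Submodule.map_top (ExteriorAlgebra.ι ℝ (M := V))]
  exact Submodule.FG.map _ Module.Finite.fg_top

/-- The tuple `(A_1,…,A_N)` is `k`-irreducible: the induced tuple on the `k`-th exterior
power is irreducible. -/
def kIrreducible {ι : Type*} [Fintype ι] [DecidableEq ι] {N : ℕ} (k : ℕ)
    (A : Fin N → Matrix ι ι ℝ) : Prop :=
  IrreducibleTuple fun i => extPowMap k (Matrix.toLin' (A i))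

/-- A linear endomorphism of a finite-dimensional real vector space is proximal if it has a
simple eigenvalue whose modulus strictly exceeds the modulus of every other (complex)
eigenvalue. -/
def ProximalEnd {V : Type*} [AddCommGroup V] [Module ℝ V] [Module.Finite ℝ V]
    [Module.Free ℝ V] (f : V →ₗ[ℝ] V) : Prop :=
  ∃ lam : ℂ, ((LinearMap.charpoly f).map (algebraMap ℝ ℂ)).roots.count lam = 1 ∧
    ∀ mu ∈ ((LinearMap.charpoly f).map (algebraMap ℝ ℂ)).roots, mu ≠ lam →
      ‖mu‖ < ‖lam‖

/-- The tuple `(A_1,…,A_N)` is proximal of all orders: for each `k = 1,…,d`, some word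
product of the induced tuple on the `k`-th exterior power is a proximal linear map. -/
def ProximalAllOrders {ι : Type*} [Fintype ι] [DecidableEq ι] {N : ℕ}
    (A : Fin N → Matrix ι ι ℝ) : Prop :=
  ∀ k : ℕ, 1 ≤ k → k ≤ Fintype.card ι →
    ∃ (n : ℕ) (i : Fin (n + 1) → Fin N),
      ProximalEnd (extPowMap k (Matrix.toLin' (wordProd A i)))

/-- The least number of open `δ`-balls needed to cover `Y` (when `Y` admits a finite cover;
junk value `0` otherwise). -/
noncomputable def coverNum {E : Type*} [PseudoMetricSpace E] (Y : Set E) (δ : ℝ) : ℕ :=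
  sInf {n : ℕ | ∃ t : Finset E, t.card = n ∧ Y ⊆ ⋃ x ∈ t, Metric.ball x δ}

/-- The upper box dimension `limsup_{δ→0⁺} log N(Y,δ) / log (1/δ)`. -/
noncomputable def upperBoxDim {E : Type*} [PseudoMetricSpace E] (Y : Set E) : ℝ :=
  Filter.limsup (fun δ : ℝ => Real.log (coverNum Y δ) / Real.log (1 / δ))
    (nhdsWithin 0 (Set.Ioi 0))

/-- The operator norm of a matrix with respect to the Euclidean norm. -/
noncomputable def opNorm {ι : Type*} [Fintype ι] [DecidableEq ι] (A : Matrix ι ι ℝ) : ℝ :=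
  ‖(Matrix.toEuclideanCLM (𝕜 := ℝ) A : EuclideanSpace ℝ ι →L[ℝ] EuclideanSpace ℝ ι)‖



set_option synthInstance.maxHeartbeats 1000000
set_option maxHeartbeats 1000000

section Aux

def ev (B : Matrix (Fin 2) (Fin 2) ℝ) : Fin 2 → ℝ :=
  (Matrix.isHermitian_iff_isSymm.mpr (Matrix.isSymm_transpose_mul_self B)).eigenvalues

lemma opNorm_nonneg' (B : Matrix (Fin 2) (Fin 2) ℝ) : 0 ≤ opNorm B := norm_nonneg _

lemma star_eq_t (B : Matrix (Fin 2) (Fin 2) ℝ) : star B = Bᵀ := by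
  rw [Matrix.star_eq_conjTranspose, Matrix.conjTranspose_eq_transpose_of_trivial]

lemma opNorm_transpose (B : Matrix (Fin 2) (Fin 2) ℝ) : opNorm Bᵀ = opNorm B := by
  rw [opNorm, ← star_eq_t, map_star, ContinuousLinearMap.star_eq_adjoint]
  exact ContinuousLinearMap.adjoint.norm_map _

lemma opNorm_mul_le (B C : Matrix (Fin 2) (Fin 2) ℝ) :
    opNorm (B * C) ≤ opNorm B * opNorm C := by
  rw [opNorm, _root_.map_mul]; exact norm_mul_le _ _

lemma opNorm_one : opNorm (1 : Matrix (Fin 2) (Fin 2) ℝ) = 1 := by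
  rw [opNorm, _root_.map_one]; exact norm_one

lemma opNorm_pos (B : Matrix (Fin 2) (Fin 2) ℝ) (hB : IsUnit B) : 0 < opNorm B := by
  rw [opNorm, norm_pos_iff]
  intro h
  have : (toEuclideanCLM (𝕜 := ℝ) B) = toEuclideanCLM (𝕜 := ℝ) 0 := by simpa using h
  have hB0 : B = 0 := (toEuclideanCLM (𝕜 := ℝ)).injective this
  rw [hB0] at hB
  simpa using hB.ne_zero (by norm_num)

lemma ev_nonneg (B : Matrix (Fin 2) (Fin 2) ℝ) (i : Fin 2) : 0 ≤ ev B i :=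
  (Matrix.posSemidef_conjTranspose_mul_self B).eigenvalues_nonneg i

lemma ev_le_sq (B : Matrix (Fin 2) (Fin 2) ℝ) (i : Fin 2) : ev B i ≤ opNorm B ^ 2 := by
  classical
  set hM := Matrix.isHermitian_iff_isSymm.mpr (Matrix.isSymm_transpose_mul_self B)
  set v : EuclideanSpace ℝ (Fin 2) := hM.eigenvectorBasis i with hv
  have hnv : ‖v‖ = 1 := hM.eigenvectorBasis.orthonormal.1 i
  set g := toEuclideanCLM (𝕜 := ℝ) B with hg
  have h1 : toEuclideanCLM (𝕜 := ℝ) (Bᵀ * B) v = (ev B i) • v := by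
    apply (WithLp.equiv 2 (Fin 2 → ℝ)).injective
    simp only [WithLp.equiv_apply, ofLp_toEuclideanCLM, WithLp.ofLp_smul]
    have := hM.mulVec_eigenvectorBasis i
    simpa [ev] using this
  have h2 : toEuclideanCLM (𝕜 := ℝ) (Bᵀ * B) = star g * g := by
    rw [_root_.map_mul, ← star_eq_t, map_star]
  have h3 : (ev B i : ℝ) = ‖g v‖ ^ 2 := by
    have hinner : inner ℝ ((star g * g) v) v = (ev B i : ℝ) := by
      rw [← h2, h1, real_inner_smul_left, real_inner_self_eq_norm_sq, hnv]
      ring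
    rw [ContinuousLinearMap.mul_apply, ContinuousLinearMap.star_eq_adjoint] at hinner
    rw [ContinuousLinearMap.adjoint_inner_left, real_inner_self_eq_norm_sq] at hinner
    rw [← hinner]
  rw [h3]
  have : ‖g v‖ ≤ opNorm B := by
    calc ‖g v‖ ≤ ‖g‖ * ‖v‖ := g.le_opNorm v
    _ = opNorm B := by rw [hnv, mul_one]; rfl
  exact pow_le_pow_left₀ (norm_nonneg _) this 2

lemma ev_prod (B : Matrix (Fin 2) (Fin 2) ℝ) : ev B 0 * ev B 1 = B.det ^ 2 := by
  have h := (Matrix.isHermitian_iff_isSymm.mpr (Matrix.isSymm_transpose_mul_self B)).det_eq_prod_eigenvalues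
  rw [Fin.prod_univ_two] at h
  rw [Matrix.det_mul, Matrix.det_transpose] at h
  simpa [ev, sq, mul_comm] using h.symm

lemma sort_pair {a b : ℝ} (h : a ≤ b) : Multiset.sort (α := ℝ) {a, b} (· ≤ ·) = [a, b] := by
  apply List.Perm.eq_of_pairwise' (r := (· ≤ · : ℝ → ℝ → Prop))
  · exact Multiset.pairwise_sort ..
  · simp [h]
  · rw [← Multiset.coe_eq_coe, Multiset.sort_eq]; rfl

lemma sval_pair (B : Matrix (Fin 2) (Fin 2) ℝ) :
    ((sval B 1 = Real.sqrt (ev B 0) ∧ sval B 2 = Real.sqrt (ev B 1)) ∨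
     (sval B 1 = Real.sqrt (ev B 1) ∧ sval B 2 = Real.sqrt (ev B 0))) ∧
    sval B 2 ≤ sval B 1 := by
  have huniv : (Finset.univ.val : Multiset (Fin 2)) = {0, 1} := by decide
  set a := Real.sqrt (ev B 0) with ha
  set b := Real.sqrt (ev B 1) with hb
  have hmap : (Finset.univ.val.map fun i : Fin 2 =>
      Real.sqrt ((Matrix.isHermitian_iff_isSymm.mpr (Matrix.isSymm_transpose_mul_self B)).eigenvalues i)) = {a, b} := by
    rw [huniv]; simp [ha, hb, ev]
  rcases le_total a b with h | h
  · have : sval B 1 = b ∧ sval B 2 = a := by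
      constructor <;> · show _ = _
                        rw [sval, hmap, sort_pair h]
                        rfl
    exact ⟨Or.inr ⟨this.1, this.2⟩, this.2 ▸ this.1 ▸ h⟩
  · have hp : ({a, b} : Multiset ℝ) = {b, a} := by rw [Multiset.pair_comm]
    have : sval B 1 = a ∧ sval B 2 = b := by
      constructor <;> · show _ = _
                        rw [sval, hmap, hp, sort_pair h]
                        rfl
    exact ⟨Or.inl ⟨this.1, this.2⟩, this.2 ▸ this.1 ▸ h⟩

lemma sval_facts (B : Matrix (Fin 2) (Fin 2) ℝ) :
    0 ≤ sval B 2 ∧ sval B 2 ≤ sval B 1 ∧ sval B 1 * sval B 2 = |B.det| ∧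
    sval B 1 ≤ opNorm B ∧ Real.sqrt |B.det| ≤ sval B 1 := by
  obtain ⟨hc, hle⟩ := sval_pair B
  have hmul : sval B 1 * sval B 2 = |B.det| := by
    have key : Real.sqrt (ev B 0) * Real.sqrt (ev B 1) = |B.det| := by
      rw [← Real.sqrt_mul (ev_nonneg B 0), ev_prod, Real.sqrt_sq_eq_abs]
    rcases hc with ⟨h1, h2⟩ | ⟨h1, h2⟩
    · rw [h1, h2]; exact key
    · rw [h1, h2, mul_comm]; exact key
  have hub : sval B 1 ≤ opNorm B := by
    have key : ∀ i, Real.sqrt (ev B i) ≤ opNorm B := by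
      intro i
      calc Real.sqrt (ev B i) ≤ Real.sqrt (opNorm B ^ 2) :=
            Real.sqrt_le_sqrt (ev_le_sq B i)
      _ = opNorm B := Real.sqrt_sq (opNorm_nonneg' B)
    rcases hc with ⟨h1, _⟩ | ⟨h1, _⟩ <;> rw [h1] <;> exact key _
  have h2nn : 0 ≤ sval B 2 := by
    rcases hc with ⟨_, h2⟩ | ⟨_, h2⟩ <;> rw [h2] <;> exact Real.sqrt_nonneg _
  refine ⟨h2nn, hle, hmul, hub, ?_⟩
  have h1nn : 0 ≤ sval B 1 := le_trans h2nn hle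
  have : |B.det| ≤ sval B 1 ^ 2 := by
    rw [← hmul, sq]
    exact mul_le_mul_of_nonneg_left hle h1nn
  calc Real.sqrt |B.det| ≤ Real.sqrt (sval B 1 ^ 2) := Real.sqrt_le_sqrt this
  _ = sval B 1 := Real.sqrt_sq h1nn

lemma svf_one (B : Matrix (Fin 2) (Fin 2) ℝ) : svf 1 B = sval B 1 := by
  rw [svf, if_pos (by norm_num)]
  norm_num

lemma svf_three (B : Matrix (Fin 2) (Fin 2) ℝ) : svf 3 B = |B.det| ^ ((3:ℝ)/2) := by
  rw [svf, if_neg (by norm_num)]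
  norm_num

lemma svf_lower (B : Matrix (Fin 2) (Fin 2) ℝ) (hdet : B.det ≠ 0) {s : ℝ}
    (h0 : 0 < s) (h2 : s ≤ 6/5) : |B.det| ^ (s/2) ≤ svf s B := by
  obtain ⟨h2nn, hle, hmul, -, hge⟩ := sval_facts B
  set d := |B.det| with hd
  have hdpos : 0 < d := abs_pos.mpr hdet
  have h1pos : 0 < sval B 1 := lt_of_lt_of_le (Real.sqrt_pos.mpr hdpos) hge
  have hge' : d ^ ((1:ℝ)/2) ≤ sval B 1 := by rwa [← Real.sqrt_eq_rpow]
  have hcard : ((Fintype.card (Fin 2) : ℕ) : ℝ) = 2 := by norm_num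
  rcases lt_or_ge s 1 with hs1 | hs1
  · -- 0 < s < 1
    rw [svf, if_pos (by rw [hcard]; linarith)]
    have hfl : ⌊s⌋₊ = 0 := Nat.floor_eq_zero.mpr hs1
    have hcl : ⌈s⌉₊ = 1 := by
      rw [Nat.ceil_eq_iff (by norm_num)]
      constructor <;> [simpa using h0; simpa using hs1.le]
    rw [hfl, hcl]
    simp only [Nat.cast_zero, sub_zero, Finset.Icc_eq_empty_of_lt (by norm_num : (1:ℕ) > 0)]
    rw [Finset.prod_empty, one_mul]
    calc d ^ (s/2) = (d ^ ((1:ℝ)/2)) ^ s := by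
          rw [← Real.rpow_mul hdpos.le]; ring_nf
    _ ≤ sval B 1 ^ s := Real.rpow_le_rpow (Real.rpow_nonneg hdpos.le _) hge' h0.le
  rcases eq_or_lt_of_le hs1 with hs1e | hs1l
  · -- s = 1
    rw [← hs1e, svf_one]
    calc d ^ ((1:ℝ)/2) ≤ sval B 1 := hge'
    _ = sval B 1 := rfl
  · -- 1 < s ≤ 6/5
    rw [svf, if_pos (by rw [hcard]; linarith)]
    have hfl : ⌊s⌋₊ = 1 := by
      rw [Nat.floor_eq_iff (by linarith)]
      refine ⟨by simpa using hs1, by push_cast; linarith⟩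
    have hcl : ⌈s⌉₊ = 2 := by
      rw [Nat.ceil_eq_iff (by norm_num)]
      refine ⟨by push_cast; linarith, by push_cast; linarith⟩
    rw [hfl, hcl, Finset.Icc_self, Finset.prod_singleton, Nat.cast_one]
    have h2pos : 0 < sval B 2 := by
      rcases lt_or_eq_of_le h2nn with h | h
      · exact h
      · exfalso; rw [← h, mul_zero] at hmul; exact hdpos.ne (hmul ▸ rfl)
    -- sval B 1 * sval B 2 ^ (s - 1) ≥ d ^ (s/2)
    have hs2eq : sval B 2 = d / sval B 1 := by
      field_simp [h1pos.ne'] at hmul ⊢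
      linarith [hmul]
    have hsplit : sval B 1 ^ (2-s) * sval B 1 ^ (s-1) = sval B 1 := by
      rw [← Real.rpow_add h1pos]
      norm_num
    have key : sval B 1 * sval B 2 ^ (s - 1) = d ^ (s-1) * sval B 1 ^ (2-s) := by
      rw [hs2eq, Real.div_rpow hdpos.le h1pos.le, mul_div_assoc']
      rw [div_eq_iff (by positivity : sval B 1 ^ (s-1) ≠ 0)]
      rw [mul_assoc, hsplit, mul_comm]
    rw [key]
    have hd2 : d ^ (s/2) = d ^ (s-1) * d ^ ((2-s)/2) := by
      rw [← Real.rpow_add hdpos]; ring_nf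
    rw [hd2]
    apply mul_le_mul_of_nonneg_left _ (Real.rpow_nonneg hdpos.le _)
    calc d ^ ((2-s)/2) = (d ^ ((1:ℝ)/2)) ^ (2-s) := by
          rw [← Real.rpow_mul hdpos.le]; ring_nf
    _ ≤ sval B 1 ^ (2-s) :=
          Real.rpow_le_rpow (Real.rpow_nonneg hdpos.le _) hge' (by linarith)

lemma abs_det_list_prod (l : List (Matrix (Fin 2) (Fin 2) ℝ)) :
    |l.prod.det| = (l.map fun M => |M.det|).prod := by
  induction l with
  | nil => simp
  | cons a t ih => simp [Matrix.det_mul, abs_mul, ih]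

lemma opNorm_list_prod_le (K : ℝ) (hK : 0 ≤ K) :
    ∀ l : List (Matrix (Fin 2) (Fin 2) ℝ), (∀ M ∈ l, opNorm M ≤ K) →
      opNorm l.prod ≤ K ^ l.length := by
  intro l
  induction l with
  | nil => intro _; simpa [opNorm_one] using le_refl 1
  | cons a t ih =>
    intro h
    have h1 : opNorm a ≤ K := h a (by simp)
    have h2 : opNorm t.prod ≤ K ^ t.length := ih fun M hM => h M (by simp [hM])
    calc opNorm (a :: t).prod = opNorm (a * t.prod) := by rw [List.prod_cons]
    _ ≤ opNorm a * opNorm t.prod := opNorm_mul_le _ _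
    _ ≤ K * K ^ t.length := mul_le_mul h1 h2 (opNorm_nonneg' _) hK
    _ = K ^ (a :: t).length := by rw [List.length_cons, pow_succ]; ring

variable (A : Matrix (Fin 2) (Fin 2) ℝ)

lemma letter_det (k : Fin 4) : |(![A,A,Aᵀ,Aᵀ] k).det| = |A.det| := by
  fin_cases k <;> simp [Matrix.det_transpose]

lemma letter_opNorm (k : Fin 4) : opNorm (![A,A,Aᵀ,Aᵀ] k) = opNorm A := by
  fin_cases k <;> simp [opNorm_transpose]

lemma wordProd_det {n : ℕ} (i : Fin n → Fin 4) :
    |(wordProd ![A,A,Aᵀ,Aᵀ] i).det| = |A.det| ^ n := by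
  rw [wordProd, abs_det_list_prod, List.map_ofFn, List.prod_ofFn]
  simp only [Function.comp]
  rw [Finset.prod_congr rfl fun j _ => letter_det A (i j)]
  simp

lemma wordProd_opNorm {n : ℕ} (i : Fin n → Fin 4) :
    opNorm (wordProd ![A,A,Aᵀ,Aᵀ] i) ≤ opNorm A ^ n := by
  have := opNorm_list_prod_le (opNorm A) (opNorm_nonneg' A)
    (List.ofFn fun j => ![A,A,Aᵀ,Aᵀ] (i j)) ?_
  · simpa [wordProd, List.length_ofFn] using this
  · intro M hM
    rw [List.mem_ofFn] at hM
    obtain ⟨j, rfl⟩ := hM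
    exact le_of_eq (letter_opNorm A _)

end Aux

/-- If `‖A‖ < 1/3` and `|det A| > 1/10` then
`P(A, A, Aᵀ, Aᵀ; 1) ≥ log (4|det A|/‖A‖) > 0`, and `dimaff(A, A, Aᵀ, Aᵀ) > 1`. -/
theorem statement12 (A : Matrix (Fin 2) (Fin 2) ℝ) (hA : IsUnit A)
    (hnorm : opNorm A < 1 / 3) (hdet : 1 / 10 < |A.det|) :
    Real.log (4 * |A.det| / opNorm A) ≤ pressure ![A, A, Aᵀ, Aᵀ] 1 ∧
    0 < Real.log (4 * |A.det| / opNorm A) ∧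
    1 < affDim ![A, A, Aᵀ, Aᵀ] := by
  have hK0 : 0 < opNorm A := opNorm_pos A hA
  set K := opNorm A with hKdef
  set D := |A.det| with hDdef
  have hD0 : 0 < D := lt_trans (by norm_num) hdet
  have hdetne : A.det ≠ 0 := abs_pos.mp hD0
  have hDK2 : D ≤ K ^ 2 := by
    obtain ⟨h2nn, hle, hmul, hub, -⟩ := sval_facts A
    rw [hDdef, ← hmul]
    nlinarith [le_trans h2nn hle]
  have hrK : Real.sqrt D ≤ K := by
    calc Real.sqrt D ≤ Real.sqrt (K ^ 2) := Real.sqrt_le_sqrt hDK2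
    _ = K := Real.sqrt_sq hK0.le
  set c := D / K with hcdef
  have hc0 : 0 < c := div_pos hD0 hK0
  have hcK : c ≤ Real.sqrt D := by
    rw [hcdef, div_le_iff₀ hK0]
    nlinarith [Real.sq_sqrt hD0.le, Real.sqrt_nonneg D]
  have hcard : ∀ n : ℕ, Fintype.card (Fin n → Fin 4) = 4 ^ n := by
    intro n; simp [Fintype.card_fun]
  have hrn : ∀ n : ℕ, Real.sqrt D ^ n = Real.sqrt (D ^ n) := by
    intro n
    induction n with
    | zero => simp
    | succ m ih => rw [pow_succ, pow_succ, ih, ← Real.sqrt_mul (pow_nonneg hD0.le m)]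
  -- per-word determinant and norms
  have hWdetpos : ∀ {n : ℕ} (i : Fin n → Fin 4), 0 < |(wordProd ![A,A,Aᵀ,Aᵀ] i).det| := by
    intro n i
    rw [wordProd_det]
    exact pow_pos hD0 n
  -- the log is positive
  have hlogpos : 0 < Real.log (4 * D / K) := by
    apply Real.log_pos
    rw [lt_div_iff₀ hK0]
    linarith
  refine ⟨?_, hlogpos, ?_⟩
  · -- pressure bound
    rw [pressure]
    set u : ℕ → ℝ := fun n =>
      Real.log (∑ i : Fin n → Fin 4, svf 1 (wordProd ![A,A,Aᵀ,Aᵀ] i)) / n with hu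
    have hsum_lb : ∀ n : ℕ, (4 * c) ^ n ≤ ∑ i : Fin n → Fin 4, svf 1 (wordProd ![A,A,Aᵀ,Aᵀ] i) := by
      intro n
      have hterm : ∀ i : Fin n → Fin 4, c ^ n ≤ svf 1 (wordProd ![A,A,Aᵀ,Aᵀ] i) := by
        intro i
        rw [svf_one]
        have h5 := (sval_facts (wordProd ![A,A,Aᵀ,Aᵀ] i)).2.2.2.2
        rw [wordProd_det, ← hrn] at h5
        calc c ^ n ≤ Real.sqrt D ^ n := pow_le_pow_left₀ hc0.le hcK n
        _ ≤ _ := h5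
      calc (4 * c) ^ n = (4 ^ n * c ^ n : ℝ) := mul_pow 4 c n
      _ = (Fintype.card (Fin n → Fin 4) : ℕ) • (c ^ n) := by
            rw [hcard n, nsmul_eq_mul]; push_cast; ring
      _ ≤ _ := by
            rw [← Finset.card_univ]
            exact Finset.card_nsmul_le_sum Finset.univ _ _ fun i _ => hterm i
    have hsum_ub : ∀ n : ℕ, (∑ i : Fin n → Fin 4, svf 1 (wordProd ![A,A,Aᵀ,Aᵀ] i)) ≤ (4 * K) ^ n := by
      intro n
      have hterm : ∀ i : Fin n → Fin 4, svf 1 (wordProd ![A,A,Aᵀ,Aᵀ] i) ≤ K ^ n := by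
        intro i
        rw [svf_one]
        exact le_trans (sval_facts (wordProd ![A,A,Aᵀ,Aᵀ] i)).2.2.2.1 (wordProd_opNorm A i)
      calc (∑ i : Fin n → Fin 4, svf 1 (wordProd ![A,A,Aᵀ,Aᵀ] i))
          ≤ (Fintype.card (Fin n → Fin 4) : ℕ) • (K ^ n) := by
            rw [← Finset.card_univ]
            exact Finset.sum_le_card_nsmul Finset.univ _ _ fun i _ => hterm i
      _ = (4 * K) ^ n := by rw [hcard n, nsmul_eq_mul, mul_pow]; push_cast; ring
    have h4c : 0 < 4 * c := by linarith
    have hlb : ∀ n : ℕ, 1 ≤ n → Real.log (4 * c) ≤ u n := by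
      intro n hn
      have hnpos : (0:ℝ) < n := by exact_mod_cast hn
      rw [hu]
      dsimp only
      rw [le_div_iff₀ hnpos]
      calc Real.log (4 * c) * n = Real.log ((4 * c) ^ n) := by
            rw [Real.log_pow]; ring
      _ ≤ _ := Real.log_le_log (pow_pos h4c n) (hsum_lb n)
    have hub : ∀ n : ℕ, u n ≤ max 0 (Real.log (4 * K)) := by
      intro n
      rcases Nat.eq_zero_or_pos n with rfl | hn
      · simp [hu]
      · have hnpos : (0:ℝ) < n := by exact_mod_cast hn
        have : u n ≤ Real.log (4 * K) := by
          rw [hu]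
          dsimp only
          rw [div_le_iff₀ hnpos]
          calc Real.log (∑ i : Fin n → Fin 4, svf 1 (wordProd ![A,A,Aᵀ,Aᵀ] i))
              ≤ Real.log ((4 * K) ^ n) :=
                Real.log_le_log (lt_of_lt_of_le (pow_pos h4c n) (hsum_lb n)) (hsum_ub n)
          _ = Real.log (4 * K) * n := by rw [Real.log_pow]; ring
        exact le_trans this (le_max_right _ _)
    have hfreq : ∃ᶠ n in Filter.atTop, Real.log (4 * D / K) ≤ u n := by
      apply Filter.Eventually.frequently
      rw [Filter.eventually_atTop]
      exact ⟨1, fun n hn => by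
        have := hlb n hn
        rwa [show 4 * c = 4 * D / K by rw [hcdef]; ring] at this⟩
    exact Filter.le_limsup_of_frequently_le hfreq
      (Filter.isBoundedUnder_of ⟨max 0 (Real.log (4 * K)), hub⟩)
  · -- affinity dimension
    rw [affDim]
    set T := ![A, A, Aᵀ, Aᵀ] with hT
    set S : Set ℝ := {s : ℝ | 0 < s ∧
      Summable fun n : ℕ => ∑ i : Fin (n + 1) → Fin 4, svf s (wordProd T i)} with hS
    have hsum_eq : ∀ (s : ℝ) (n : ℕ),
        (∑ i : Fin (n+1) → Fin 4, |(wordProd T i).det| ^ (s/2)) =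
          (4 * D ^ (s/2)) ^ (n+1) := by
      intro s n
      have : ∀ i : Fin (n+1) → Fin 4,
          |(wordProd T i).det| ^ (s/2) = (D ^ (s/2)) ^ (n+1) := by
        intro i
        rw [wordProd_det, ← Real.rpow_natCast D (n+1), ← Real.rpow_mul hD0.le,
          mul_comm, Real.rpow_mul hD0.le, Real.rpow_natCast]
      rw [Finset.sum_congr rfl fun i _ => this i, Finset.sum_const, Finset.card_univ,
        hcard (n+1), nsmul_eq_mul, mul_pow]
      push_cast; ring
    have h3mem : (3:ℝ) ∈ S := by
      refine ⟨by norm_num, ?_⟩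
      set q := 4 * D ^ ((3:ℝ)/2) with hq
      have hq0 : 0 ≤ q := by positivity
      have h19 : D < 1/9 := by nlinarith
      have hq1 : q < 1 := by
        have h1 : D ^ ((3:ℝ)/2) < (1/9 : ℝ) ^ ((3:ℝ)/2) :=
          Real.rpow_lt_rpow hD0.le h19 (by norm_num)
        have h2 : (1/9 : ℝ) ^ ((3:ℝ)/2) = 1/27 := by
          rw [show (1/9:ℝ) = ((1/3:ℝ)) ^ (2:ℕ) by norm_num,
            ← Real.rpow_natCast (1/3 : ℝ) 2, ← Real.rpow_mul (by norm_num)]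
          rw [show ((2:ℕ):ℝ) * ((3:ℝ)/2) = ((3:ℕ):ℝ) by push_cast; ring,
            Real.rpow_natCast]
          norm_num
        rw [hq]
        rw [h2] at h1
        linarith
      have hgeom := (summable_geometric_of_lt_one hq0 hq1).mul_left q
      apply hgeom.congr
      intro n
      have : ∀ i : Fin (n+1) → Fin 4, svf 3 (wordProd T i) = |(wordProd T i).det| ^ ((3:ℝ)/2) :=
        fun i => svf_three _
      rw [Finset.sum_congr rfl fun i _ => this i]
      rw [show ((3:ℝ)/2) = (3:ℝ)/2 from rfl]
      rw [hsum_eq 3 n]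
      rw [pow_succ, ← hq]
      ring
    have hlbS : ∀ s ∈ S, (6/5 : ℝ) ≤ s := by
      intro s hs
      by_contra hcon
      have hs65 : s < 6/5 := lt_of_not_ge hcon
      obtain ⟨hs0, hsum⟩ := hs
      have hbase : (1:ℝ) ≤ 4 * D ^ (s/2) := by
        have h1 : (1/10 : ℝ) ^ ((3:ℝ)/5) ≤ D ^ (s/2) := by
          calc (1/10 : ℝ) ^ ((3:ℝ)/5) ≤ (1/10 : ℝ) ^ (s/2) :=
                Real.rpow_le_rpow_of_exponent_ge (by norm_num) (by norm_num) (by linarith)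
          _ ≤ D ^ (s/2) := Real.rpow_le_rpow (by norm_num) (by linarith) (by linarith)
        have h2 : (1/4 : ℝ) ≤ (1/10 : ℝ) ^ ((3:ℝ)/5) := by
          rw [← pow_le_pow_iff_left₀ (by norm_num : (0:ℝ) ≤ 1/4)
            (Real.rpow_nonneg (by norm_num) _) (by norm_num : (5:ℕ) ≠ 0)]
          have h3 : ((1/10 : ℝ) ^ ((3:ℝ)/5)) ^ (5:ℕ) = (1/10 : ℝ) ^ (3:ℕ) := by
            rw [← Real.rpow_natCast ((1/10 : ℝ) ^ ((3:ℝ)/5)) 5, ← Real.rpow_mul (by norm_num),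
              show ((3:ℝ)/5) * ((5:ℕ):ℝ) = ((3:ℕ):ℝ) by push_cast; ring, Real.rpow_natCast]
          rw [h3]
          norm_num
        linarith
      have hge1 : ∀ n : ℕ, (1:ℝ) ≤ ∑ i : Fin (n+1) → Fin 4, svf s (wordProd T i) := by
        intro n
        have hterm : ∀ i : Fin (n+1) → Fin 4,
            |(wordProd T i).det| ^ (s/2) ≤ svf s (wordProd T i) := by
          intro i
          exact svf_lower _ (abs_pos.mp (hWdetpos i)) hs0 (by linarith)
        calc (1:ℝ) = 1 ^ (n+1) := (one_pow _).symm
        _ ≤ (4 * D ^ (s/2)) ^ (n+1) := pow_le_pow_left₀ (by norm_num) hbase _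
        _ = ∑ i : Fin (n+1) → Fin 4, |(wordProd T i).det| ^ (s/2) := (hsum_eq s n).symm
        _ ≤ _ := Finset.sum_le_sum fun i _ => hterm i
      have := (hsum.tendsto_atTop_zero.eventually_lt_const (by norm_num : (0:ℝ) < 1)).exists
      obtain ⟨n, hn⟩ := this
      linarith [hge1 n]
    have h65 : (6/5 : ℝ) ≤ sInf S := le_csInf ⟨3, h3mem⟩ hlbS
    linarith

end PaperProj
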